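/- Fix n ≥ 1 and let Θ : Γ(E) → Γ(E_*) be a contractive multi-analytic operator, with defect operator Δ_Θ := (I − Θ*Θ)^{1/2}. Then for every j = 1, …, n and f, g ∈ Γ(E): (a) ‖Δ_Θ (L_j^E f)‖ = ‖Δ_Θ f‖, and (b) ⟨Δ_Θ (L_i^E f), Δ_Θ (L_j^E g)⟩ = 0 whenever i ≠ j. Consequently, for each j there is a unique bounded operator C_j on the closure of the range of Δ_Θ satisfying C_j (Δ_Θ f) = Δ_Θ (L_j^E f) for all f ∈ Γ(E), each C_j is an isometry, and C_i* C_j = δ_{ij} I on cl ran Δ_Θ (i.e. C = [C_1, …, C_n] is a row isometry). -/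

import Mathlib

set_option linter.unusedSectionVars false

noncomputable section
open ContinuousLinearMap
open scoped ENNReal NNReal ComplexInnerProductSpace
section Defect
variable {H K : Type*} [NormedAddCommGroup H] [InnerProductSpace ℂ H] [CompleteSpace H]
  [NormedAddCommGroup K] [InnerProductSpace ℂ K] [CompleteSpace K]

/-- The defect operator `Δ_A := (I - A*A)^{1/2}` of a contraction `A : H → K`. -/
noncomputable def defect (A : H →L[ℂ] K) : H →L[ℂ] H :=
  CFC.sqrt (1 - (ContinuousLinearMap.adjoint A).comp A)

/-- Closure of the range of an operator, as a submodule. -/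
noncomputable def clRan (A : H →L[ℂ] K) : Submodule ℂ K :=
  (LinearMap.range (A : H →ₗ[ℂ] K)).topologicalClosure

theorem defect_mem_clRan (A : H →L[ℂ] K) (x : H) : defect A x ∈ clRan (defect A) :=
  Submodule.le_topologicalClosure _ (LinearMap.mem_range_self (defect A : H →ₗ[ℂ] H) x)

instance clRan_completeSpace (A : H →L[ℂ] K) : CompleteSpace (clRan A) :=
  (Submodule.isClosed_topologicalClosure _).isComplete.completeSpace_coe
end Defect

section FockDef
/-- Words in the generators `{1, …, n}`: the free monoid on `Fin n`. -/
abbrev Word (n : ℕ) := List (Fin n)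

/-- The full Fock space over `ℂⁿ` with coefficients in `E`, realized as
`ℓ²(F_n^+, E)`, the Hilbert space of square-summable `E`-valued families indexed by words. -/
abbrev Fock (n : ℕ) (E : Type*) [NormedAddCommGroup E] [InnerProductSpace ℂ E] : Type _ :=
  lp (fun _ : Word n => E) 2

variable {n : ℕ} {E : Type*} [NormedAddCommGroup E] [InnerProductSpace ℂ E]

/-- The underlying function of `L_i f`: `(L_i f)(α) = f(β)` if `α = iβ`, else `0`. -/
def shiftFun (i : Fin n) (f : Word n → E) : Word n → E
  | [] => 0
  | a :: β => if a = i then f β else 0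

theorem shiftFun_cons (i : Fin n) (f : Word n → E) (β : Word n) :
    shiftFun i f (i :: β) = f β := by simp [shiftFun]

theorem shiftFun_eq_zero {i : Fin n} {f : Word n → E} {α : Word n}
    (hα : α ∉ Set.range (fun β : Word n => (i :: β : Word n))) : shiftFun i f α = 0 := by
  match α with
  | [] => rfl
  | a :: β =>
    have : ¬ (a = i) := by rintro rfl; exact hα ⟨β, rfl⟩
    simp [shiftFun, this]

theorem cons_injective (i : Fin n) :
    Function.Injective (fun β : Word n => (i :: β : Word n)) := fun a b h => by
  simpa using h

theorem shiftFun_memℓp (i : Fin n) (f : Fock n E) : Memℓp (shiftFun i ⇑f) 2 := by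
  refine memℓp_gen ?_
  have h0 : ∀ α ∉ Set.range (fun β : Word n => (i :: β : Word n)),
      ‖shiftFun i (⇑f) α‖ ^ (2 : ℝ≥0∞).toReal = 0 := by
    intro α hα
    rw [shiftFun_eq_zero hα]
    simp [Real.zero_rpow]
  refine ((cons_injective i).summable_iff h0).mp ?_
  have h1 : (fun α => ‖shiftFun i (⇑f) α‖ ^ (2 : ℝ≥0∞).toReal) ∘
      (fun β : Word n => (i :: β : Word n)) = fun β => ‖f β‖ ^ (2 : ℝ≥0∞).toReal := by
    funext β
    simp [Function.comp, shiftFun_cons]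
  rw [h1]
  exact (lp.memℓp f).summable (by norm_num)

theorem shiftFun_norm (i : Fin n) (f : Fock n E) :
    ‖(⟨shiftFun i ⇑f, shiftFun_memℓp i f⟩ : Fock n E)‖ = ‖f‖ := by
  have hp : 0 < (2 : ℝ≥0∞).toReal := by norm_num
  refine Real.rpow_left_injOn (by norm_num : (2 : ℝ≥0∞).toReal ≠ 0)
    (norm_nonneg _) (norm_nonneg _) ?_
  simp only []
  rw [lp.norm_rpow_eq_tsum hp, lp.norm_rpow_eq_tsum hp]
  have h0 : (Function.support fun α => ‖shiftFun i (⇑f) α‖ ^ (2 : ℝ≥0∞).toReal) ⊆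
      Set.range (fun β : Word n => (i :: β : Word n)) := by
    intro α hα
    simp only [Function.mem_support] at hα
    by_contra hr
    exact hα (by rw [shiftFun_eq_zero hr]; simp [Real.zero_rpow])
  rw [← (cons_injective i).tsum_eq h0]
  congr 1
  funext β
  simp [shiftFun_cons]

/-- The left creation operator `L_i` on the Fock space, as a linear map. -/
noncomputable def creationL (i : Fin n) : Fock n E →ₗ[ℂ] Fock n E where
  toFun f := ⟨shiftFun i ⇑f, shiftFun_memℓp i f⟩
  map_add' f g := by
    apply lp.ext
    funext α
    match α with
    | [] => simp [shiftFun, lp.coeFn_add]; erw [Pi.add_apply]; simp [shiftFun]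
    | a :: β =>
      by_cases h : a = i <;> simp [shiftFun, h, lp.coeFn_add] <;> erw [Pi.add_apply] <;> simp [shiftFun, h]
  map_smul' c f := by
    apply lp.ext
    funext α
    match α with
    | [] => simp [shiftFun, lp.coeFn_smul]
    | a :: β =>
      by_cases h : a = i <;> simp [shiftFun, h, lp.coeFn_smul]

/-- The left creation operator `L_i = L_i^E ∈ B(Γ(E))`, defined by
`(L_i f)(α) = f(β)` if `α = iβ` for some word `β`, and `(L_i f)(α) = 0` otherwise. -/
noncomputable def creation (i : Fin n) : Fock n E →L[ℂ] Fock n E :=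
  (creationL i).mkContinuous 1 (fun f => by
    rw [one_mul]
    exact le_of_eq (shiftFun_norm i f))


/-- The `E`-valued family supported at the empty word with value `v`. -/
def constFun (n : ℕ) (v : E) : Word n → E := fun α => if α = [] then v else 0

theorem constFun_memℓp (v : E) : Memℓp (constFun n v) 2 := by
  refine (memℓp_zero ?_).of_exponent_ge (zero_le : (0 : ℝ≥0∞) ≤ 2)
  refine (Set.finite_singleton ([] : Word n)).subset ?_
  intro α hα
  simp only [Set.mem_setOf_eq, constFun] at hα
  by_contra h
  simp only [Set.mem_singleton_iff] at h
  exact hα (if_neg h)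

/-- The canonical embedding of `E` into `Γ(E)` (families supported at the empty word). -/
def fockConst (n : ℕ) (v : E) : Fock n E := ⟨constFun n v, constFun_memℓp v⟩

theorem fockConst_norm_le (f : Fock n E) :
    ‖(⟨constFun n (f []), constFun_memℓp _⟩ : Fock n E)‖ ≤ ‖f‖ := by
  have hp : 0 < (2 : ℝ≥0∞).toReal := by norm_num
  rw [← Real.rpow_le_rpow_iff (norm_nonneg _) (norm_nonneg _) hp]
  rw [lp.norm_rpow_eq_tsum hp]
  have h1 : (∑' α : Word n, ‖constFun n (f []) α‖ ^ (2 : ℝ≥0∞).toReal) =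
      ‖f []‖ ^ (2 : ℝ≥0∞).toReal := by
    refine tsum_eq_single ([] : Word n) ?_
    intro b' hb'
    simp [constFun, if_neg hb', Real.zero_rpow hp.ne']
  rw [h1]
  exact Real.rpow_le_rpow (norm_nonneg _) (lp.norm_apply_le_norm two_ne_zero f []) hp.le

/-- `P_∅`, the orthogonal projection of `Γ(E)` onto the subspace of families supported
at the empty word, as a linear map. -/
noncomputable def projEmptyL : Fock n E →ₗ[ℂ] Fock n E where
  toFun f := ⟨constFun n (f []), constFun_memℓp _⟩
  map_add' f g := by
    apply lp.ext; funext α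
    by_cases h : α = [] <;> simp [constFun, h, lp.coeFn_add] <;> erw [Pi.add_apply] <;> simp [constFun, h]
  map_smul' c f := by
    apply lp.ext; funext α
    by_cases h : α = [] <;> simp [constFun, h, lp.coeFn_smul]

/-- `P_∅ = P_∅^E`, the orthogonal projection of `Γ(E)` onto the subspace of families
supported at the empty word (identified with `E`). -/
noncomputable def projEmpty : Fock n E →L[ℂ] Fock n E :=
  projEmptyL.mkContinuous 1 (fun f => by rw [one_mul]; exact fockConst_norm_le f)

end FockDef

section MyAux
set_option synthInstance.maxHeartbeats 1000000
set_option maxHeartbeats 1000000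

variable {n : ℕ} {E : Type*} [NormedAddCommGroup E] [InnerProductSpace ℂ E]

theorem creation_apply (i : Fin n) (f : Fock n E) (α : Word n) :
    (creation i f) α = shiftFun i (⇑f) α := rfl

theorem inner_creation (i j : Fin n) (f g : Fock n E) :
    ⟪(creation i f : Fock n E), creation j g⟫ = if i = j then ⟪f, g⟫ else 0 := by
  rw [lp.inner_eq_tsum]
  by_cases hij : i = j
  · subst hij
    rw [if_pos rfl, lp.inner_eq_tsum]
    have hsupp : (Function.support fun α => ⟪(creation i f) α, (creation i g) α⟫) ⊆
        Set.range (fun β : Word n => (i :: β : Word n)) := by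
      intro α hα
      simp only [Function.mem_support] at hα
      by_contra hr
      rw [creation_apply, shiftFun_eq_zero hr, inner_zero_left] at hα
      exact hα rfl
    rw [← (cons_injective i).tsum_eq hsupp]
    congr 1
    funext β
    simp only [Function.comp, creation_apply, shiftFun_cons]
  · rw [if_neg hij]
    have : (fun α => ⟪(creation i f) α, (creation j g) α⟫) = fun _ => (0 : ℂ) := by
      funext α
      match α with
      | [] => simp [creation_apply, shiftFun]
      | a :: β =>
        by_cases ha : a = i
        · subst ha
          have : ¬ (a = j) := fun h => hij (h ▸ rfl)
          simp [creation_apply, shiftFun, this]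
        · simp [creation_apply, shiftFun, ha]
    rw [this, tsum_zero]

end MyAux

section MyAux2
set_option synthInstance.maxHeartbeats 1000000
set_option maxHeartbeats 1000000

variable {H K : Type*} [NormedAddCommGroup H] [InnerProductSpace ℂ H] [CompleteSpace H]
  [NormedAddCommGroup K] [InnerProductSpace ℂ K] [CompleteSpace K]

theorem one_sub_adjoint_comp_nonneg (A : H →L[ℂ] K) (hA : ‖A‖ ≤ 1) :
    (0 : H →L[ℂ] H) ≤ 1 - (ContinuousLinearMap.adjoint A).comp A := by
  rw [ContinuousLinearMap.nonneg_iff_isPositive]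
  constructor
  · rw [← ContinuousLinearMap.isSelfAdjoint_iff_isSymmetric, isSelfAdjoint_iff, star_sub, star_one, ContinuousLinearMap.star_eq_adjoint,
      ContinuousLinearMap.adjoint_comp, ContinuousLinearMap.adjoint_adjoint]
  · intro x
    have h1 : ContinuousLinearMap.reApplyInnerSelf (1 - (ContinuousLinearMap.adjoint A).comp A) x
        = ‖x‖ ^ 2 - ‖A x‖ ^ 2 := by
      simp only [ContinuousLinearMap.reApplyInnerSelf_apply, ContinuousLinearMap.sub_apply,
        ContinuousLinearMap.one_apply, ContinuousLinearMap.comp_apply, inner_sub_left,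
        ContinuousLinearMap.adjoint_inner_left, map_sub]
      rw [← inner_self_eq_norm_sq (𝕜 := ℂ), ← inner_self_eq_norm_sq (𝕜 := ℂ)]
    rw [h1]
    have h2 : ‖A x‖ ≤ ‖x‖ := by
      calc ‖A x‖ ≤ ‖A‖ * ‖x‖ := A.le_opNorm x
        _ ≤ 1 * ‖x‖ := by gcongr
        _ = ‖x‖ := one_mul _
    nlinarith [norm_nonneg (A x), norm_nonneg x]

theorem defect_inner (A : H →L[ℂ] K) (hA : ‖A‖ ≤ 1) (x y : H) :
    ⟪defect A x, defect A y⟫ = ⟪x, y⟫ - ⟪A x, A y⟫ := by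
  have hsd : IsSelfAdjoint (defect A) := IsSelfAdjoint.of_nonneg (CFC.sqrt_nonneg _)
  have hsq : (defect A).comp (defect A) = 1 - (ContinuousLinearMap.adjoint A).comp A :=
    CFC.sqrt_mul_sqrt_self _ (one_sub_adjoint_comp_nonneg A hA)
  calc ⟪defect A x, defect A y⟫
      = ⟪x, ContinuousLinearMap.adjoint (defect A) (defect A y)⟫ := by
        rw [ContinuousLinearMap.adjoint_inner_right]
    _ = ⟪x, ((defect A).comp (defect A)) y⟫ := by
        rw [hsd.adjoint_eq]; rfl
    _ = ⟪x, y⟫ - ⟪A x, A y⟫ := by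
        rw [hsq]
        simp only [ContinuousLinearMap.sub_apply, ContinuousLinearMap.one_apply,
          ContinuousLinearMap.comp_apply, inner_sub_right,
          ContinuousLinearMap.adjoint_inner_right]

end MyAux2

section MyAux3
set_option synthInstance.maxHeartbeats 1000000
set_option maxHeartbeats 1000000

variable {n : ℕ} {E Estar : Type*}
  [NormedAddCommGroup E] [InnerProductSpace ℂ E] [CompleteSpace E]
  [NormedAddCommGroup Estar] [InnerProductSpace ℂ Estar] [CompleteSpace Estar]
  (Θ : Fock n E →L[ℂ] Fock n Estar)

theorem defect_creation_inner (hΘc : ‖Θ‖ ≤ 1)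
    (hΘ : ∀ i : Fin n, Θ.comp (creation i) = (creation i).comp Θ)
    (i j : Fin n) (f g : Fock n E) :
    ⟪defect Θ (creation i f), defect Θ (creation j g)⟫ =
      if i = j then ⟪defect Θ f, defect Θ g⟫ else 0 := by
  have hcomm : ∀ (k : Fin n) (h : Fock n E), Θ (creation k h) = creation k (Θ h) := by
    intro k h
    have := congrArg (fun T => T h) (hΘ k)
    simpa using this
  rw [defect_inner Θ hΘc, hcomm, hcomm, inner_creation, inner_creation,
    defect_inner Θ hΘc]
  by_cases hij : i = j <;> simp [hij]

theorem norm_defect_creation (hΘc : ‖Θ‖ ≤ 1)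
    (hΘ : ∀ i : Fin n, Θ.comp (creation i) = (creation i).comp Θ)
    (j : Fin n) (f : Fock n E) :
    ‖defect Θ (creation j f)‖ = ‖defect Θ f‖ := by
  have h := defect_creation_inner Θ hΘc hΘ j j f f
  rw [if_pos rfl] at h
  have h2 := congrArg (RCLike.re (K := ℂ)) h
  rw [inner_self_eq_norm_sq (𝕜 := ℂ), inner_self_eq_norm_sq (𝕜 := ℂ)] at h2
  calc ‖defect Θ (creation j f)‖ = √(‖defect Θ (creation j f)‖ ^ 2) :=
        (Real.sqrt_sq (norm_nonneg _)).symm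
    _ = √(‖defect Θ f‖ ^ 2) := by rw [h2]
    _ = ‖defect Θ f‖ := Real.sqrt_sq (norm_nonneg _)

end MyAux3

section MyAux4
set_option synthInstance.maxHeartbeats 1000000
set_option maxHeartbeats 1000000

variable {H K : Type*} [NormedAddCommGroup H] [InnerProductSpace ℂ H] [CompleteSpace H]
  [NormedAddCommGroup K] [InnerProductSpace ℂ K] [CompleteSpace K]

theorem denseRange_inclusion_clRan (A : H →L[ℂ] K)
    (e : ↥(LinearMap.range (A : H →ₗ[ℂ] K)) → ↥(clRan A))
    (he : ∀ x, (e x : K) = ↑x) : DenseRange e := by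
  refine Topology.IsInducing.subtypeVal.dense_iff.2 fun x => ?_
  have himg : (Subtype.val '' Set.range e : Set K) = (LinearMap.range (A : H →ₗ[ℂ] K) : Set K) := by
    rw [← Set.range_comp]
    have h2 : (Subtype.val ∘ e) = fun x : ↥(LinearMap.range (A : H →ₗ[ℂ] K)) => (x : K) := funext he
    rw [h2]
    exact Subtype.range_coe
  show (x : K) ∈ closure (Subtype.val '' Set.range e)
  rw [himg]
  exact x.prop

end MyAux4

section MyAux5
set_option synthInstance.maxHeartbeats 1000000
set_option maxHeartbeats 1000000

variable {H K : Type*} [NormedAddCommGroup H] [InnerProductSpace ℂ H]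
  [NormedAddCommGroup K] [InnerProductSpace ℂ K]

theorem norm_eq_of_inner_self_eq {x : H} {y : K} (h : ⟪x, x⟫ = ⟪y, y⟫) : ‖x‖ = ‖y‖ := by
  have h2 := congrArg (RCLike.re (K := ℂ)) h
  rw [inner_self_eq_norm_sq (𝕜 := ℂ), inner_self_eq_norm_sq (𝕜 := ℂ)] at h2
  calc ‖x‖ = √(‖x‖ ^ 2) := (Real.sqrt_sq (norm_nonneg _)).symm
    _ = √(‖y‖ ^ 2) := by rw [h2]
    _ = ‖y‖ := Real.sqrt_sq (norm_nonneg _)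

end MyAux5

set_option synthInstance.maxHeartbeats 1000000 in
set_option maxHeartbeats 2000000 in
/-- For a contractive multi-analytic `Θ : Γ(E) → Γ(E_*)` with defect
`Δ_Θ = (I − Θ*Θ)^{1/2}`: (a) `‖Δ_Θ(L_j f)‖ = ‖Δ_Θ f‖`; (b) `⟪Δ_Θ(L_i f), Δ_Θ(L_j g)⟫ = 0`
for `i ≠ j`; consequently for each `j` there is a unique bounded operator `C_j` on
`cl ran Δ_Θ` with `C_j(Δ_Θ f) = Δ_Θ(L_j f)`, each `C_j` is an isometry, and
`C_i* C_j = δ_{ij} I` (a row isometry). -/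
theorem rowIsometry_of_contractive_multiAnalytic {n : ℕ} (hn : 1 ≤ n) {E Estar : Type*}
    [NormedAddCommGroup E] [InnerProductSpace ℂ E] [CompleteSpace E]
    [NormedAddCommGroup Estar] [InnerProductSpace ℂ Estar] [CompleteSpace Estar]
    (Θ : Fock n E →L[ℂ] Fock n Estar) (hΘc : ‖Θ‖ ≤ 1)
    (hΘ : ∀ i : Fin n, Θ.comp (creation i) = (creation i).comp Θ) :
    (∀ (j : Fin n) (f : Fock n E), ‖defect Θ (creation j f)‖ = ‖defect Θ f‖) ∧
    (∀ (i j : Fin n) (f g : Fock n E), i ≠ j →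
      ⟪defect Θ (creation i f), defect Θ (creation j g)⟫ = 0) ∧
    (∀ j : Fin n, ∃! C : clRan (defect Θ) →L[ℂ] clRan (defect Θ),
      ∀ f : Fock n E, C ⟨defect Θ f, defect_mem_clRan _ _⟩ =
        ⟨defect Θ (creation j f), defect_mem_clRan _ _⟩) ∧
    (∀ C : Fin n → (clRan (defect Θ) →L[ℂ] clRan (defect Θ)),
      (∀ (j : Fin n) (f : Fock n E), C j ⟨defect Θ f, defect_mem_clRan _ _⟩ =
        ⟨defect Θ (creation j f), defect_mem_clRan _ _⟩) →
      (∀ j : Fin n, Isometry (C j)) ∧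
      (∀ i j : Fin n, (ContinuousLinearMap.adjoint (C i)).comp (C j) =
        if i = j then 1 else 0)) := by
  classical
  have key := defect_creation_inner Θ hΘc hΘ
  have hnorm := norm_defect_creation Θ hΘc hΘ
  have hcongr : ∀ (j : Fin n) {f g : Fock n E}, defect Θ f = defect Θ g →
      defect Θ (creation j f) = defect Θ (creation j g) := by
    intro j f g h
    have h0 : ‖defect Θ (creation j f) - defect Θ (creation j g)‖ = 0 := by
      rw [← map_sub, ← map_sub, hnorm, map_sub, h, sub_self, norm_zero]
    rw [← sub_eq_zero]
    exact norm_eq_zero.mp h0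
  have hsec0 : ∀ y : LinearMap.range (defect Θ : Fock n E →ₗ[ℂ] Fock n E), ∃ x, defect Θ x = (y : Fock n E) :=
    fun y => y.2
  choose sec hsec using hsec0
  let e : ↥(LinearMap.range (defect Θ : Fock n E →ₗ[ℂ] Fock n E)) →ₗᵢ[ℂ] ↥(clRan (defect Θ)) :=
    ⟨Submodule.inclusion (Submodule.le_topologicalClosure _), fun x => rfl⟩
  have he_dense : DenseRange e := denseRange_inclusion_clRan _ e (fun x => rfl)
  have he_ui : IsUniformInducing e := e.isometry.isUniformInducing
  have hex : ∀ x : LinearMap.range (defect Θ : Fock n E →ₗ[ℂ] Fock n E),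
      e x = ⟨defect Θ (sec x), defect_mem_clRan _ _⟩ :=
    fun x => Subtype.ext (hsec x).symm
  have hC_inner : ∀ (C : Fin n → (clRan (defect Θ) →L[ℂ] clRan (defect Θ))),
      (∀ (j : Fin n) (f : Fock n E), C j ⟨defect Θ f, defect_mem_clRan _ _⟩ =
        ⟨defect Θ (creation j f), defect_mem_clRan _ _⟩) →
      ∀ (i j : Fin n) (x y : clRan (defect Θ)),
        ⟪C i x, C j y⟫ = if i = j then ⟪x, y⟫ else 0 := by
    intro C hC i j
    by_cases hij : i = j
    · subst hij
      simp only [if_pos rfl]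
      refine he_dense.induction_on₂ ?_ ?_
      · exact isClosed_eq (Continuous.inner ((C i).continuous.comp continuous_fst)
          ((C i).continuous.comp continuous_snd))
          (Continuous.inner continuous_fst continuous_snd)
      · intro a b
        rw [hex a, hex b, hC, hC, Submodule.coe_inner, Submodule.coe_inner]
        have h := key i i (sec a) (sec b)
        rw [if_pos rfl] at h
        exact h
    · simp only [if_neg hij]
      refine he_dense.induction_on₂ ?_ ?_
      · exact isClosed_eq (Continuous.inner ((C i).continuous.comp continuous_fst)
          ((C j).continuous.comp continuous_snd)) continuous_const
      · intro a b
        rw [hex a, hex b, hC, hC, Submodule.coe_inner]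
        have h := key i j (sec a) (sec b)
        rw [if_neg hij] at h
        exact h
  refine ⟨hnorm, fun i j f g hij => by rw [key i j f g, if_neg hij], fun j => ?_,
    fun C hC => ?_⟩
  · -- existence and uniqueness of C_j
    let C0 : ↥(LinearMap.range (defect Θ : Fock n E →ₗ[ℂ] Fock n E)) →ₗᵢ[ℂ] ↥(clRan (defect Θ)) :=
      { toFun := fun y => ⟨defect Θ (creation j (sec y)), defect_mem_clRan _ _⟩
        map_add' := fun y z => by
          apply Subtype.ext
          have h1 : defect Θ (sec (y + z)) = defect Θ (sec y + sec z) := by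
            rw [map_add, hsec, hsec, hsec]; rfl
          show defect Θ (creation j (sec (y + z))) =
            defect Θ (creation j (sec y)) + defect Θ (creation j (sec z))
          rw [hcongr j h1, map_add, map_add]
        map_smul' := fun c y => by
          apply Subtype.ext
          have h1 : defect Θ (sec (c • y)) = defect Θ (c • sec y) := by
            rw [map_smul, hsec, hsec]; rfl
          show defect Θ (creation j (sec (c • y))) = c • defect Θ (creation j (sec y))
          rw [hcongr j h1, map_smul, map_smul]
        norm_map' := fun y => by
          show ‖defect Θ (creation j (sec y))‖ = ‖y‖
          rw [hnorm j (sec y), hsec]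
          exact Submodule.norm_coe y }
    let Cj : ↥(clRan (defect Θ)) →L[ℂ] ↥(clRan (defect Θ)) :=
      C0.toContinuousLinearMap.extend e.toContinuousLinearMap
    have hCj : ∀ f : Fock n E, Cj ⟨defect Θ f, defect_mem_clRan _ _⟩ =
        ⟨defect Θ (creation j f), defect_mem_clRan _ _⟩ := by
      intro f
      have h1 : (⟨defect Θ f, defect_mem_clRan _ _⟩ : clRan (defect Θ)) =
          e.toContinuousLinearMap ⟨defect Θ f, LinearMap.mem_range_self _ f⟩ := rfl
      rw [h1]
      rw [ContinuousLinearMap.extend_eq _ he_dense he_ui]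
      apply Subtype.ext
      show defect Θ (creation j (sec ⟨defect Θ f, LinearMap.mem_range_self _ f⟩)) =
        defect Θ (creation j f)
      exact hcongr j (by rw [hsec])
    refine ⟨Cj, hCj, ?_⟩
    intro C' hC'
    apply ContinuousLinearMap.coeFn_injective
    refine he_dense.equalizer C'.continuous Cj.continuous ?_
    funext x
    show C' (e x) = Cj (e x)
    rw [hex x, hC', hCj]
  · have hi := hC_inner C hC
    constructor
    · intro j
      refine AddMonoidHomClass.isometry_of_norm _ fun x => ?_
      have h := hi j j x x
      rw [if_pos rfl] at h
      exact norm_eq_of_inner_self_eq h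
    · intro i j
      refine ContinuousLinearMap.ext fun y => ?_
      refine ext_inner_left ℂ fun x => ?_
      rw [ContinuousLinearMap.comp_apply, ContinuousLinearMap.adjoint_inner_right]
      by_cases hij : i = j
      · subst hij
        simp only [if_pos rfl, ContinuousLinearMap.one_apply]
        have h := hi i i x y
        rwa [if_pos rfl] at h
      · simp only [if_neg hij, ContinuousLinearMap.zero_apply, inner_zero_right]
        have h := hi i j x y
        rwa [if_neg hij] at h

end
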